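/- Let C > 0, σ > 0, m, n ∈ ℕ, B ∈ ℝ^{m×n}, d ∈ ℝ^m, λ ∈ ℝ^m and w ∈ ℝ^n, and set z = B·w + d + λ/σ. Then the function s ↦ L_σ(w, s; λ) on ℝ^m attains its minimum at a unique point s*, whose i-th coordinate equals z_i − C/σ if z_i > C/σ, equals z_i if z_i < 0, and equals 0 if 0 ≤ z_i ≤ C/σ. -/

import Mathlib

open RealInnerProductSpace

/-- View a plain vector `Fin m → ℝ` as an element of Euclidean space `ℝ^m`. -/
noncomputable def toEuc {m : ℕ} (v : Fin m → ℝ) : EuclideanSpace ℝ (Fin m) :=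
  (EuclideanSpace.equiv (Fin m) ℝ).symm v

/-- Per-coordinate soft-thresholding inequality with strong-convexity slack. -/
lemma soft_key (C σ z x : ℝ) (hC : 0 < C) (hσ : 0 < σ) :
    C * max (if C/σ < z then z - C/σ else if z < 0 then z else 0) 0
      + (σ/2) * ((if C/σ < z then z - C/σ else if z < 0 then z else 0) - z)^2
      + (σ/2) * (x - (if C/σ < z then z - C/σ else if z < 0 then z else 0))^2
    ≤ C * max x 0 + (σ/2) * (x - z)^2 := by
  have hx1 : x ≤ max x 0 := le_max_left x 0
  have hx2 : (0:ℝ) ≤ max x 0 := le_max_right x 0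
  have hcs : C / σ * σ = C := div_mul_cancel₀ C hσ.ne'
  split_ifs with h1 h2
  · rw [max_eq_left (sub_nonneg.2 h1.le)]
    nlinarith
  · rw [max_eq_right h2.le]
    nlinarith
  · simp only [max_eq_right le_rfl]
    push_neg at h1 h2
    have hzc : z * σ ≤ C := (le_div_iff₀ hσ).mp h1
    rcases le_total x 0 with hx | hx
    · rw [max_eq_right hx]; nlinarith [mul_nonneg (mul_nonneg hσ.le h2) (neg_nonneg.2 hx)]
    · rw [max_eq_left hx]; nlinarith

/-- With `z = Bw + d + λ/σ`, the function `s ↦ L_σ(w, s; λ)`, where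
`L_σ(w, s; λ) = (1/2)‖w‖² + C·∑ᵢ max(sᵢ, 0) − ⟨λ, s − Bw − d⟩ + (σ/2)‖s − Bw − d‖²`,
attains its minimum at a unique point `s*` with `s*ᵢ = zᵢ − C/σ` if `zᵢ > C/σ`,
`s*ᵢ = zᵢ` if `zᵢ < 0`, and `s*ᵢ = 0` if `0 ≤ zᵢ ≤ C/σ`. -/
theorem stmt_15 (C σ : ℝ) (hC : 0 < C) (hσ : 0 < σ) (m n : ℕ)
    (B : Matrix (Fin m) (Fin n) ℝ) (d lam : EuclideanSpace ℝ (Fin m))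
    (w : EuclideanSpace ℝ (Fin n)) (z : EuclideanSpace ℝ (Fin m))
    (hz : z = toEuc (B.mulVec w) + d + σ⁻¹ • lam) :
    ∃ s : EuclideanSpace ℝ (Fin m),
      (∀ t : EuclideanSpace ℝ (Fin m),
        (1 / 2) * ‖w‖ ^ 2 + C * ∑ i, max (s i) 0 - ⟪lam, s - toEuc (B.mulVec w) - d⟫ +
            (σ / 2) * ‖s - toEuc (B.mulVec w) - d‖ ^ 2 ≤
          (1 / 2) * ‖w‖ ^ 2 + C * ∑ i, max (t i) 0 - ⟪lam, t - toEuc (B.mulVec w) - d⟫ +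
            (σ / 2) * ‖t - toEuc (B.mulVec w) - d‖ ^ 2) ∧
      (∀ s' : EuclideanSpace ℝ (Fin m),
        (∀ t : EuclideanSpace ℝ (Fin m),
          (1 / 2) * ‖w‖ ^ 2 + C * ∑ i, max (s' i) 0 - ⟪lam, s' - toEuc (B.mulVec w) - d⟫ +
              (σ / 2) * ‖s' - toEuc (B.mulVec w) - d‖ ^ 2 ≤
            (1 / 2) * ‖w‖ ^ 2 + C * ∑ i, max (t i) 0 - ⟪lam, t - toEuc (B.mulVec w) - d⟫ +
              (σ / 2) * ‖t - toEuc (B.mulVec w) - d‖ ^ 2) → s' = s) ∧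
      ∀ i : Fin m,
        (C / σ < z i → s i = z i - C / σ) ∧
        (z i < 0 → s i = z i) ∧
        (0 ≤ z i ∧ z i ≤ C / σ → s i = 0) := by
  classical
  have hz' : ∀ i, z i = B.mulVec w i + d i + lam i / σ := by
    intro i; rw [hz]
    simp [toEuc, div_eq_inv_mul, EuclideanSpace.equiv]
  have reform : ∀ t : EuclideanSpace ℝ (Fin m),
      C * ∑ i, max (t i) 0 - ⟪lam, t - toEuc (B.mulVec w) - d⟫ +
        (σ/2) * ‖t - toEuc (B.mulVec w) - d‖^2
      = ∑ i, (C * max (t i) 0 + (σ/2) * (t i - z i)^2) - ∑ i, (lam i)^2/(2*σ) := by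
    intro t
    have hn : ‖t - toEuc (B.mulVec w) - d‖^2 = ∑ i, (t i - B.mulVec w i - d i)^2 := by
      rw [EuclideanSpace.norm_eq, Real.sq_sqrt (by positivity)]
      refine Finset.sum_congr rfl fun i _ => ?_
      simp [toEuc, sq_abs, EuclideanSpace.equiv]
    have hi : ⟪lam, t - toEuc (B.mulVec w) - d⟫ = ∑ i, lam i * (t i - B.mulVec w i - d i) := by
      simp [PiLp.inner_apply, RCLike.inner_apply, toEuc, EuclideanSpace.equiv]
      exact Finset.sum_congr rfl fun i _ => mul_comm _ _
    rw [hn, hi, Finset.mul_sum, Finset.mul_sum, ← Finset.sum_sub_distrib,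
      ← Finset.sum_add_distrib, ← Finset.sum_sub_distrib]
    refine Finset.sum_congr rfl fun i _ => ?_
    rw [hz' i]; field_simp; ring
  set s : EuclideanSpace ℝ (Fin m) :=
    WithLp.toLp 2 (fun i => if C/σ < z i then z i - C/σ else if z i < 0 then z i else 0) with hs
  have hsapp : ∀ i, s i = if C/σ < z i then z i - C/σ else if z i < 0 then z i else 0 :=
    fun i => rfl
  -- key with slack, summed
  have hkey : ∀ t : EuclideanSpace ℝ (Fin m),
      ∑ i, (C * max (s i) 0 + (σ/2) * (s i - z i)^2) + (σ/2) * ∑ i, (t i - s i)^2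
      ≤ ∑ i, (C * max (t i) 0 + (σ/2) * (t i - z i)^2) := by
    intro t
    rw [Finset.mul_sum, ← Finset.sum_add_distrib]
    refine Finset.sum_le_sum fun i _ => ?_
    have := soft_key C σ (z i) (t i) hC hσ
    rw [← hsapp i] at this
    linarith
  have hmain : ∀ t : EuclideanSpace ℝ (Fin m),
      (1 / 2) * ‖w‖ ^ 2 + C * ∑ i, max (s i) 0 - ⟪lam, s - toEuc (B.mulVec w) - d⟫ +
          (σ / 2) * ‖s - toEuc (B.mulVec w) - d‖ ^ 2 ≤
        (1 / 2) * ‖w‖ ^ 2 + C * ∑ i, max (t i) 0 - ⟪lam, t - toEuc (B.mulVec w) - d⟫ +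
          (σ / 2) * ‖t - toEuc (B.mulVec w) - d‖ ^ 2 := by
    intro t
    have h1 := reform s
    have h2 := reform t
    have h3 := hkey t
    have h4 : (0:ℝ) ≤ (σ/2) * ∑ i, (t i - s i)^2 := by positivity
    linarith
  refine ⟨s, hmain, ?_, ?_⟩
  · intro s' hs'
    have h1 := hs' s
    have h2 := hmain s'
    have h1' : ∑ i, (C * max (s' i) 0 + (σ/2) * (s' i - z i)^2)
        ≤ ∑ i, (C * max (s i) 0 + (σ/2) * (s i - z i)^2) := by
      have e1 := reform s'
      have e2 := reform s
      linarith
    have h3 := hkey s'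
    have hzero : ∑ i, (s' i - s i)^2 ≤ 0 := by
      have hσ2 : (0:ℝ) < σ/2 := by positivity
      nlinarith
    have hall : ∀ i ∈ Finset.univ, (s' i - s i)^2 = 0 := by
      intro i _
      have := Finset.sum_nonneg (fun i (_ : i ∈ Finset.univ) => sq_nonneg (s' i - s i))
      have hsum0 : ∑ i, (s' i - s i)^2 = 0 := le_antisymm hzero this
      exact (Finset.sum_eq_zero_iff_of_nonneg
        (fun j _ => sq_nonneg (s' j - s j))).mp hsum0 i (Finset.mem_univ i)
    ext i
    have := hall i (Finset.mem_univ i)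
    have := pow_eq_zero_iff (n := 2) (by norm_num) |>.mp this
    linarith [sub_eq_zero.mp this]
  · intro i
    refine ⟨fun h => ?_, fun h => ?_, fun h => ?_⟩
    · rw [hsapp i, if_pos h]
    · rw [hsapp i, if_neg (by linarith [div_pos hC hσ]), if_pos h]
    · rw [hsapp i, if_neg (not_lt.2 h.2), if_neg (not_lt.2 h.1)]
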